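/- Let τ = (n_1, ..., n_{r}) ∈ ℤ^r and suppose M is a free W(k)-module with basis e_1,...,e_r and φ is a σ-linear automorphism of M[1/p] with φ(e_i) = p^{n_i}·e_{i+1} (indices mod r). Then the Dieudonné–Fontaine torsion T(M,φ) satisfies T(M,φ) ≤ |n_1| + |n_2| + ... + |n_r|; more precisely T(M,φ) ≤ S(τ) ≤ W(τ) ≤ Σ|n_i|, where S(τ) and W(τ) are the sign and value deviations of τ. -/

import Mathlib

open Pointwise

noncomputable section

/-- `W(k)[1/p]`. -/
abbrev Wp (p : ℕ) [Fact p.Prime] (k : Type) [CommRing k] : Type :=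
  Localization.Away (p : WittVector p k)

/-- `p` as a unit of `W(k)[1/p]`. -/
noncomputable def pUnit (p : ℕ) [Fact p.Prime] (k : Type) [CommRing k] : (Wp p k)ˣ :=
  (IsLocalization.map_units (M := Submonoid.powers ((p : WittVector p k))) (Wp p k)
    ⟨_, Submonoid.mem_powers _⟩).unit

/-- The standard lattice `W(k)^r ⊆ (W(k)[1/p])^r`. -/
noncomputable def stdLat (p : ℕ) [Fact p.Prime] (k : Type) [CommRing k] (r : ℕ) :
    Submodule (WittVector p k) (Fin r → Wp p k) :=
  Submodule.span (WittVector p k) (Set.range fun i : Fin r => Pi.single i (1 : Wp p k))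

/-- `M₁` is (the image of) a Dieudonné–Fontaine `p`-divisible object: it is spanned by a
linearly independent family `f` with `φ (f i) = p^{m i} • f (π i)` for a permutation `π`,
such that on every cycle of `π` the exponents `m i` are all nonnegative or all nonpositive. -/
def DFLattice (p : ℕ) [Fact p.Prime] (k : Type) [CommRing k] (r : ℕ)
    (φ : (Fin r → Wp p k) → (Fin r → Wp p k))
    (M₁ : Submodule (WittVector p k) (Fin r → Wp p k)) : Prop :=
  ∃ (f : Fin r → (Fin r → Wp p k)) (π : Equiv.Perm (Fin r)) (m : Fin r → ℤ),
    Submodule.span (WittVector p k) (Set.range f) = M₁ ∧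
    LinearIndependent (WittVector p k) f ∧
    (∀ i, φ (f i) = ((pUnit p k ^ (m i) : (Wp p k)ˣ) : Wp p k) • f (π i)) ∧
    (∀ i j, π.SameCycle i j → ((0 ≤ m i ∧ 0 ≤ m j) ∨ (m i ≤ 0 ∧ m j ≤ 0)))

/-- The set of `T` such that some Dieudonné–Fontaine sublattice `M₁ ⊆ M` satisfies
`p^T M ⊆ M₁`; the Dieudonné–Fontaine torsion `𝐓(M,φ)` is its infimum. -/
def DFTorsionSet (p : ℕ) [Fact p.Prime] (k : Type) [CommRing k] (r : ℕ)
    (φ : (Fin r → Wp p k) → (Fin r → Wp p k)) : Set ℕ :=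
  {T : ℕ | ∃ M₁ : Submodule (WittVector p k) (Fin r → Wp p k),
    DFLattice p k r φ M₁ ∧ M₁ ≤ stdLat p k r ∧
    ∀ x ∈ stdLat p k r, ((p : WittVector p k) ^ T) • x ∈ M₁}

/-- The cyclic extension of `n : Fin r → ℤ` to `ℕ`. -/
def nper (r : ℕ) (hr : 0 < r) (n : Fin r → ℤ) : ℕ → ℤ :=
  fun i => n ⟨i % r, Nat.mod_lt i hr⟩

/-- The nonnegative sign deviation of `τ = (n 0, …, n (r-1))` (used when `Σ n i ≥ 0`):
`max {0, −Σ_{i=t}^{u} n i}` over cyclic windows `(t,u)` all of whose suffix sums are `≤ 0`. -/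
def signDevNonneg (r : ℕ) (hr : 0 < r) (n : Fin r → ℤ) : ℤ :=
  sSup (insert 0 {z : ℤ | ∃ t u : ℕ, 1 ≤ t ∧ t ≤ r ∧ t ≤ u ∧ u ≤ r + t - 1 ∧
    (∀ v : ℕ, t ≤ v → v ≤ u → (∑ i ∈ Finset.Icc v u, nper r hr n i) ≤ 0) ∧
    z = -(∑ i ∈ Finset.Icc t u, nper r hr n i)})

/-- The nonpositive sign deviation (used when `Σ n i ≤ 0`). -/
def signDevNonpos (r : ℕ) (hr : 0 < r) (n : Fin r → ℤ) : ℤ :=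
  sSup (insert 0 {z : ℤ | ∃ t u : ℕ, 1 ≤ t ∧ t ≤ r ∧ t ≤ u ∧ u ≤ r + t - 1 ∧
    (∀ v : ℕ, t ≤ v → v ≤ u → 0 ≤ (∑ i ∈ Finset.Icc v u, nper r hr n i)) ∧
    z = (∑ i ∈ Finset.Icc t u, nper r hr n i)})

/-- The sign deviation `𝐒τ`. -/
def signDev (r : ℕ) (hr : 0 < r) (n : Fin r → ℤ) : ℤ :=
  if 0 < ∑ i, n i then signDevNonneg r hr n
  else if ∑ i, n i < 0 then signDevNonpos r hr n
  else min (signDevNonneg r hr n) (signDevNonpos r hr n)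

/-- The value deviation `𝐖τ`: for nonnegative (resp. nonpositive) total sum, the absolute
value of the sum of the nonpositive (resp. nonnegative) entries; the minimum if the sum is 0. -/
def valueDev (r : ℕ) (n : Fin r → ℤ) : ℤ :=
  if 0 < ∑ i, n i then ∑ i, max 0 (-(n i))
  else if ∑ i, n i < 0 then ∑ i, max 0 (n i)
  else min (∑ i, max 0 (-(n i))) (∑ i, max 0 (n i))

set_option maxHeartbeats 1000000
set_option synthInstance.maxHeartbeats 400000

namespace Stmt9Aux

/-! ### Combinatorial lemmas -/

lemma sum_Icc_split (f : ℕ → ℤ) {t d u : ℕ} (h1 : t ≤ d + 1) (h2 : d ≤ u) :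
    ∑ i ∈ Finset.Icc t u, f i
      = (∑ i ∈ Finset.Icc t d, f i) + ∑ i ∈ Finset.Icc (d + 1) u, f i := by
  have hset : Finset.Icc t u = Finset.Icc t d ∪ Finset.Icc (d + 1) u := by
    ext x; simp only [Finset.mem_Icc, Finset.mem_union]; omega
  have hdisj : Disjoint (Finset.Icc t d) (Finset.Icc (d + 1) u) := by
    rw [Finset.disjoint_left]
    intro x hx hx'
    simp only [Finset.mem_Icc] at hx hx'
    omega
  rw [hset, Finset.sum_union hdisj]

variable {r : ℕ} (hr : 0 < r) (n : Fin r → ℤ)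

lemma nper_add (i : ℕ) : nper r hr n (i + r) = nper r hr n i := by
  simp [nper, Nat.add_mod_right]

lemma nper_val (i : Fin r) : nper r hr n i.val = n i := by
  unfold nper
  congr 1
  exact Fin.ext (by simp [Nat.mod_eq_of_lt i.isLt])

lemma sum_shift (t u : ℕ) :
    ∑ i ∈ Finset.Icc (t + r) (u + r), nper r hr n i
      = ∑ i ∈ Finset.Icc t u, nper r hr n i := by
  rw [← Finset.image_add_right_Icc t u r, Finset.sum_image (by intro x _ y _ h; simp only at h; omega)]
  exact Finset.sum_congr rfl fun i _ => nper_add hr n i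

lemma sum_period (t : ℕ) :
    ∑ i ∈ Finset.Icc (t + 1) (t + r), nper r hr n i
      = ∑ i ∈ Finset.Icc 1 r, nper r hr n i := by
  induction t with
  | zero => simp
  | succ s ih =>
    have h1 : ∑ i ∈ Finset.Icc (s + 1) (s + 1 + r), nper r hr n i
        = nper r hr n (s + 1) + ∑ i ∈ Finset.Icc (s + 1 + 1) (s + 1 + r), nper r hr n i := by
      rw [sum_Icc_split (nper r hr n) (d := s + 1) (by omega) (by omega)]
      simp
    have h2 : ∑ i ∈ Finset.Icc (s + 1) (s + 1 + r), nper r hr n i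
        = (∑ i ∈ Finset.Icc (s + 1) (s + r), nper r hr n i) + nper r hr n (s + 1 + r) := by
      rw [sum_Icc_split (nper r hr n) (d := s + r) (by omega) (by omega)]
      congr 1
      rw [show s + r + 1 = s + 1 + r by omega]
      simp
    have h3 : nper r hr n (s + 1 + r) = nper r hr n (s + 1) := nper_add hr n (s + 1)
    rw [← ih]
    linarith

lemma sum_total :
    ∑ i ∈ Finset.Icc 1 r, nper r hr n i = ∑ i, n i := by
  have h0 : ∑ i, n i = ∑ i ∈ Finset.range r, nper r hr n i := by
    rw [← Fin.sum_univ_eq_sum_range (fun i => nper r hr n i) r]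
    exact Finset.sum_congr rfl fun i _ => (nper_val hr n i).symm
  have hrange : Finset.range r = Finset.Icc 0 (r - 1) := by
    ext x
    simp only [Finset.mem_range, Finset.mem_Icc]
    omega
  have h1 : ∑ i ∈ Finset.Icc 0 r, nper r hr n i
      = nper r hr n 0 + ∑ i ∈ Finset.Icc 1 r, nper r hr n i := by
    rw [sum_Icc_split (nper r hr n) (d := 0) (by omega) (by omega)]
    simp
  have h2 : ∑ i ∈ Finset.Icc 0 r, nper r hr n i
      = (∑ i ∈ Finset.Icc 0 (r - 1), nper r hr n i) + nper r hr n r := by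
    rw [sum_Icc_split (nper r hr n) (d := r - 1) (by omega) (by omega)]
    congr 1
    rw [show r - 1 + 1 = r by omega]
    simp
  have h3 : nper r hr n r = nper r hr n 0 := by simpa using nper_add hr n 0
  rw [h0, hrange]
  linarith

lemma sum_window_le (g : Fin r → ℤ) (hg : ∀ i, 0 ≤ g i) {t u : ℕ} (hu : u ≤ r + t - 1) :
    ∑ i ∈ Finset.Icc t u, g ⟨i % r, Nat.mod_lt i hr⟩ ≤ ∑ i, g i := by
  have hinj : ∀ x ∈ Finset.Icc t u, ∀ y ∈ Finset.Icc t u,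
      (⟨x % r, Nat.mod_lt x hr⟩ : Fin r) = ⟨y % r, Nat.mod_lt y hr⟩ → x = y := by
    intro x hx y hy hxy
    simp only [Finset.mem_Icc] at hx hy
    have hmod : x % r = y % r := by simpa using congrArg Fin.val hxy
    rcases le_total x y with h | h
    · have hdvd := (Nat.modEq_iff_dvd' h).mp hmod
      have : y - x = 0 ∨ r ≤ y - x := by
        rcases Nat.eq_zero_or_pos (y - x) with h0 | h0
        · exact Or.inl h0
        · exact Or.inr (Nat.le_of_dvd h0 hdvd)
      omega
    · have hdvd := (Nat.modEq_iff_dvd' h).mp hmod.symm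
      have : x - y = 0 ∨ r ≤ x - y := by
        rcases Nat.eq_zero_or_pos (x - y) with h0 | h0
        · exact Or.inl h0
        · exact Or.inr (Nat.le_of_dvd h0 hdvd)
      omega
  have himg : ∑ j ∈ (Finset.Icc t u).image (fun i => (⟨i % r, Nat.mod_lt i hr⟩ : Fin r)), g j
      = ∑ i ∈ Finset.Icc t u, g ⟨i % r, Nat.mod_lt i hr⟩ := Finset.sum_image hinj
  rw [← himg]
  exact Finset.sum_le_sum_of_subset_of_nonneg (Finset.subset_univ _) fun i _ _ => hg i

/-! ### Deviation bounds -/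

lemma forall_le_nonneg :
    ∀ z ∈ insert (0:ℤ) {z : ℤ | ∃ t u : ℕ, 1 ≤ t ∧ t ≤ r ∧ t ≤ u ∧ u ≤ r + t - 1 ∧
      (∀ v : ℕ, t ≤ v → v ≤ u → (∑ i ∈ Finset.Icc v u, nper r hr n i) ≤ 0) ∧
      z = -(∑ i ∈ Finset.Icc t u, nper r hr n i)},
      z ≤ ∑ i, max 0 (-(n i)) := by
  intro z hz
  rcases Set.mem_insert_iff.mp hz with h0 | hmem
  · rw [h0]
    exact Finset.sum_nonneg fun i _ => le_max_left 0 _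
  · obtain ⟨t, u, ht1, htr, htu, hur, -, hz⟩ := hmem
    rw [hz]
    have h1 : -(∑ i ∈ Finset.Icc t u, nper r hr n i)
        ≤ ∑ i ∈ Finset.Icc t u, max 0 (-(nper r hr n i)) := by
      rw [← Finset.sum_neg_distrib]
      exact Finset.sum_le_sum fun i _ => le_max_right 0 _
    exact le_trans h1 (sum_window_le hr (fun j => max 0 (-(n j))) (fun i => le_max_left 0 _) hur)

lemma forall_le_nonpos :
    ∀ z ∈ insert (0:ℤ) {z : ℤ | ∃ t u : ℕ, 1 ≤ t ∧ t ≤ r ∧ t ≤ u ∧ u ≤ r + t - 1 ∧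
      (∀ v : ℕ, t ≤ v → v ≤ u → 0 ≤ (∑ i ∈ Finset.Icc v u, nper r hr n i)) ∧
      z = (∑ i ∈ Finset.Icc t u, nper r hr n i)},
      z ≤ ∑ i, max 0 (n i) := by
  intro z hz
  rcases Set.mem_insert_iff.mp hz with h0 | hmem
  · rw [h0]
    exact Finset.sum_nonneg fun i _ => le_max_left 0 _
  · obtain ⟨t, u, ht1, htr, htu, hur, -, hz⟩ := hmem
    rw [hz]
    have h1 : (∑ i ∈ Finset.Icc t u, nper r hr n i)
        ≤ ∑ i ∈ Finset.Icc t u, max 0 (nper r hr n i) :=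
      Finset.sum_le_sum fun i _ => le_max_right 0 _
    exact le_trans h1 (sum_window_le hr (fun j => max 0 (n j)) (fun i => le_max_left 0 _) hur)

lemma bddAbove_nonneg :
    BddAbove (insert (0:ℤ) {z : ℤ | ∃ t u : ℕ, 1 ≤ t ∧ t ≤ r ∧ t ≤ u ∧ u ≤ r + t - 1 ∧
      (∀ v : ℕ, t ≤ v → v ≤ u → (∑ i ∈ Finset.Icc v u, nper r hr n i) ≤ 0) ∧
      z = -(∑ i ∈ Finset.Icc t u, nper r hr n i)}) :=
  ⟨∑ i, max 0 (-(n i)), fun z hz => forall_le_nonneg hr n z hz⟩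

lemma bddAbove_nonpos :
    BddAbove (insert (0:ℤ) {z : ℤ | ∃ t u : ℕ, 1 ≤ t ∧ t ≤ r ∧ t ≤ u ∧ u ≤ r + t - 1 ∧
      (∀ v : ℕ, t ≤ v → v ≤ u → 0 ≤ (∑ i ∈ Finset.Icc v u, nper r hr n i)) ∧
      z = (∑ i ∈ Finset.Icc t u, nper r hr n i)}) :=
  ⟨∑ i, max 0 (n i), fun z hz => forall_le_nonpos hr n z hz⟩

lemma signDevNonneg_nonneg : 0 ≤ signDevNonneg r hr n :=
  le_csSup (bddAbove_nonneg hr n) (Set.mem_insert _ _)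

lemma signDevNonpos_nonneg : 0 ≤ signDevNonpos r hr n :=
  le_csSup (bddAbove_nonpos hr n) (Set.mem_insert _ _)

lemma signDevNonneg_le : signDevNonneg r hr n ≤ ∑ i, max 0 (-(n i)) :=
  csSup_le ⟨0, Set.mem_insert _ _⟩ (forall_le_nonneg hr n)

lemma signDevNonpos_le : signDevNonpos r hr n ≤ ∑ i, max 0 (n i) :=
  csSup_le ⟨0, Set.mem_insert _ _⟩ (forall_le_nonpos hr n)

/-! ### The correction exponents, nonnegative case -/

noncomputable def Apos (t : ℕ) : ℤ :=
  (Finset.Icc t (t + r - 1)).sup' (Finset.nonempty_Icc.mpr (by omega))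
    fun u => max 0 (-(∑ i ∈ Finset.Icc t u, nper r hr n i))

lemma le_Apos {t u : ℕ} (h1 : t ≤ u) (h2 : u ≤ t + r - 1) :
    -(∑ i ∈ Finset.Icc t u, nper r hr n i) ≤ Apos hr n t := by
  have hm : u ∈ Finset.Icc t (t + r - 1) := by simp only [Finset.mem_Icc]; omega
  have := Finset.le_sup'
    (fun u => max 0 (-(∑ i ∈ Finset.Icc t u, nper r hr n i))) hm
  exact le_trans (le_max_right 0 _) this

lemma Apos_nonneg (t : ℕ) : 0 ≤ Apos hr n t := by
  have hm : t ∈ Finset.Icc t (t + r - 1) := by simp only [Finset.mem_Icc]; omega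
  have := Finset.le_sup'
    (fun u => max 0 (-(∑ i ∈ Finset.Icc t u, nper r hr n i))) hm
  exact le_trans (le_max_left 0 _) this

lemma Apos_le {t : ℕ} {c : ℤ} (h0 : 0 ≤ c)
    (h : ∀ u, t ≤ u → u ≤ t + r - 1 → -(∑ i ∈ Finset.Icc t u, nper r hr n i) ≤ c) :
    Apos hr n t ≤ c := by
  unfold Apos
  apply Finset.sup'_le
  intro u hu
  simp only [Finset.mem_Icc] at hu
  exact max_le h0 (h u hu.1 hu.2)

lemma Apos_per (t : ℕ) : Apos hr n (t + r) = Apos hr n t := by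
  apply le_antisymm
  · apply Apos_le hr n (Apos_nonneg hr n t)
    intro u hu1 hu2
    have hs : ∑ i ∈ Finset.Icc (t + r) u, nper r hr n i
        = ∑ i ∈ Finset.Icc t (u - r), nper r hr n i := by
      rw [← sum_shift hr n t (u - r), show u - r + r = u by omega]
    rw [hs]
    exact le_Apos hr n (by omega) (by omega)
  · apply Apos_le hr n (Apos_nonneg hr n (t + r))
    intro u hu1 hu2
    have hs : ∑ i ∈ Finset.Icc t u, nper r hr n i
        = ∑ i ∈ Finset.Icc (t + r) (u + r), nper r hr n i := (sum_shift hr n t u).symm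
    rw [hs]
    exact le_Apos hr n (by omega) (by omega)

lemma Apos_rec (hsum : 0 ≤ ∑ i, n i) (t : ℕ) (ht : 1 ≤ t) :
    Apos hr n (t + 1) ≤ nper r hr n t + Apos hr n t := by
  have hAt : -(nper r hr n t) ≤ Apos hr n t := by
    have h := le_Apos hr n (t := t) (u := t) (le_refl t) (by omega)
    simpa using h
  apply Apos_le hr n (by linarith)
  intro u hu1 hu2
  have hsplit : ∑ i ∈ Finset.Icc t u, nper r hr n i
      = nper r hr n t + ∑ i ∈ Finset.Icc (t + 1) u, nper r hr n i := by
    rw [sum_Icc_split (nper r hr n) (d := t) (by omega) (by omega)]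
    simp
  rcases Nat.lt_or_ge u (t + r) with h | h
  · have := le_Apos hr n (t := t) (u := u) (by omega) (by omega)
    linarith
  · have hu' : u = t + r := by omega
    subst hu'
    have hfull : ∑ i ∈ Finset.Icc t (t + r - 1), nper r hr n i = ∑ i, n i := by
      obtain ⟨s, rfl⟩ := Nat.exists_eq_add_of_le ht
      rw [show 1 + s + r - 1 = s + r by omega, show (1 + s : ℕ) = s + 1 by omega,
        sum_period hr n s, sum_total hr n]
    have hsplit2 : ∑ i ∈ Finset.Icc t (t + r), nper r hr n i
        = (∑ i ∈ Finset.Icc t (t + r - 1), nper r hr n i) + nper r hr n (t + r) := by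
      rw [sum_Icc_split (nper r hr n) (d := t + r - 1) (by omega) (by omega)]
      congr 1
      rw [show t + r - 1 + 1 = t + r by omega]
      simp
    have hNp := nper_add hr n t
    linarith

lemma Apos_bound (t : ℕ) (ht : 1 ≤ t) (htr : t ≤ r) :
    Apos hr n t ≤ signDevNonneg r hr n := by
  apply Apos_le hr n (signDevNonneg_nonneg hr n)
  intro u hu1 hu2
  obtain ⟨u0, hu0mem, hu0min⟩ := Finset.exists_min_image (Finset.Icc t u)
    (fun v => ∑ i ∈ Finset.Icc t v, nper r hr n i) (Finset.nonempty_Icc.mpr hu1)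
  simp only [Finset.mem_Icc] at hu0mem
  have hle : ∑ i ∈ Finset.Icc t u0, nper r hr n i ≤ ∑ i ∈ Finset.Icc t u, nper r hr n i := by
    have := hu0min u (by simp only [Finset.mem_Icc]; omega)
    simpa using this
  rcases le_or_gt 0 (∑ i ∈ Finset.Icc t u0, nper r hr n i) with hpos | hneg
  · linarith [signDevNonneg_nonneg hr n]
  · have hmem : -(∑ i ∈ Finset.Icc t u0, nper r hr n i)
        ∈ insert (0:ℤ) {z : ℤ | ∃ t u : ℕ, 1 ≤ t ∧ t ≤ r ∧ t ≤ u ∧ u ≤ r + t - 1 ∧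
          (∀ v : ℕ, t ≤ v → v ≤ u → (∑ i ∈ Finset.Icc v u, nper r hr n i) ≤ 0) ∧
          z = -(∑ i ∈ Finset.Icc t u, nper r hr n i)} := by
      apply Set.mem_insert_of_mem
      refine ⟨t, u0, ht, htr, hu0mem.1, by omega, ?_, rfl⟩
      intro v hv1 hv2
      rcases Nat.eq_or_lt_of_le hv1 with rfl | hlt
      · linarith
      · have hsplitv : ∑ i ∈ Finset.Icc v u0, nper r hr n i
            = ∑ i ∈ Finset.Icc t u0, nper r hr n i
              - ∑ i ∈ Finset.Icc t (v - 1), nper r hr n i := by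
          have hs := sum_Icc_split (nper r hr n) (t := t) (d := v - 1) (u := u0)
            (by omega) (by omega)
          rw [show v - 1 + 1 = v by omega] at hs
          linarith
        have hmin := hu0min (v - 1) (by simp only [Finset.mem_Icc]; omega)
        linarith
    have h2 : -(∑ i ∈ Finset.Icc t u0, nper r hr n i) ≤ signDevNonneg r hr n :=
      le_csSup (bddAbove_nonneg hr n) hmem
    linarith

/-! ### The correction exponents, nonpositive case -/

noncomputable def Aneg (t : ℕ) : ℤ :=
  (Finset.Icc t (t + r - 1)).sup' (Finset.nonempty_Icc.mpr (by omega))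
    fun v => max 0 (∑ i ∈ Finset.Icc v (t + r - 1), nper r hr n i)

lemma le_Aneg {t v : ℕ} (h1 : t ≤ v) (h2 : v ≤ t + r - 1) :
    (∑ i ∈ Finset.Icc v (t + r - 1), nper r hr n i) ≤ Aneg hr n t := by
  have hm : v ∈ Finset.Icc t (t + r - 1) := by simp only [Finset.mem_Icc]; omega
  have := Finset.le_sup'
    (fun v => max 0 (∑ i ∈ Finset.Icc v (t + r - 1), nper r hr n i)) hm
  exact le_trans (le_max_right 0 _) this

lemma Aneg_nonneg (t : ℕ) : 0 ≤ Aneg hr n t := by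
  have hm : t ∈ Finset.Icc t (t + r - 1) := by simp only [Finset.mem_Icc]; omega
  have := Finset.le_sup'
    (fun v => max 0 (∑ i ∈ Finset.Icc v (t + r - 1), nper r hr n i)) hm
  exact le_trans (le_max_left 0 _) this

lemma Aneg_le {t : ℕ} {c : ℤ} (h0 : 0 ≤ c)
    (h : ∀ v, t ≤ v → v ≤ t + r - 1 → (∑ i ∈ Finset.Icc v (t + r - 1), nper r hr n i) ≤ c) :
    Aneg hr n t ≤ c := by
  unfold Aneg
  apply Finset.sup'_le
  intro v hv
  simp only [Finset.mem_Icc] at hv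
  exact max_le h0 (h v hv.1 hv.2)

lemma Aneg_per (t : ℕ) : Aneg hr n (t + r) = Aneg hr n t := by
  apply le_antisymm
  · apply Aneg_le hr n (Aneg_nonneg hr n t)
    intro v hv1 hv2
    have hs : ∑ i ∈ Finset.Icc v (t + r + r - 1), nper r hr n i
        = ∑ i ∈ Finset.Icc (v - r) (t + r - 1), nper r hr n i := by
      rw [← sum_shift hr n (v - r) (t + r - 1), show v - r + r = v by omega,
        show t + r - 1 + r = t + r + r - 1 by omega]
    rw [hs]
    exact le_Aneg hr n (by omega) (by omega)
  · apply Aneg_le hr n (Aneg_nonneg hr n (t + r))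
    intro v hv1 hv2
    have hs : ∑ i ∈ Finset.Icc v (t + r - 1), nper r hr n i
        = ∑ i ∈ Finset.Icc (v + r) (t + r + r - 1), nper r hr n i := by
      rw [← sum_shift hr n v (t + r - 1), show t + r - 1 + r = t + r + r - 1 by omega]
    rw [hs]
    exact le_Aneg hr n (by omega) (by omega)

lemma Aneg_rec (hsum : ∑ i, n i ≤ 0) (t : ℕ) :
    Aneg hr n t + nper r hr n t ≤ Aneg hr n (t + 1) := by
  have hA1 : nper r hr n t ≤ Aneg hr n (t + 1) := by
    have h := le_Aneg hr n (t := t + 1) (v := t + r) (by omega) (by omega)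
    rw [show t + 1 + r - 1 = t + r by omega] at h
    have hs : ∑ i ∈ Finset.Icc (t + r) (t + r), nper r hr n i = nper r hr n (t + r) := by simp
    rw [hs, nper_add hr n t] at h
    exact h
  have key : Aneg hr n t ≤ Aneg hr n (t + 1) - nper r hr n t := by
    apply Aneg_le hr n (by linarith)
    intro v hv1 hv2
    have hsplit : ∑ i ∈ Finset.Icc v (t + r), nper r hr n i
        = (∑ i ∈ Finset.Icc v (t + r - 1), nper r hr n i) + nper r hr n (t + r) := by
      rw [sum_Icc_split (nper r hr n) (d := t + r - 1) (by omega) (by omega)]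
      congr 1
      rw [show t + r - 1 + 1 = t + r by omega]
      simp
    have hNp := nper_add hr n t
    rcases Nat.eq_or_lt_of_le hv1 with rfl | hlt
    · have hsplit2 : ∑ i ∈ Finset.Icc t (t + r), nper r hr n i
          = nper r hr n t + ∑ i ∈ Finset.Icc (t + 1) (t + r), nper r hr n i := by
        rw [sum_Icc_split (nper r hr n) (d := t) (by omega) (by omega)]
        simp
      have hper := sum_period hr n t
      have htot := sum_total hr n
      linarith
    · have hle := le_Aneg hr n (t := t + 1) (v := v) (by omega) (by omega)
      rw [show t + 1 + r - 1 = t + r by omega] at hle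
      linarith
  linarith

lemma Aneg_bound (t : ℕ) (ht : 1 ≤ t) (htr : t ≤ r) :
    Aneg hr n t ≤ signDevNonpos r hr n := by
  apply Aneg_le hr n (signDevNonpos_nonneg hr n)
  intro v hv1 hv2
  obtain ⟨u0, hu0mem, hu0max⟩ := Finset.exists_max_image (Finset.Icc v (t + r - 1))
    (fun u => ∑ i ∈ Finset.Icc v u, nper r hr n i) (Finset.nonempty_Icc.mpr hv2)
  simp only [Finset.mem_Icc] at hu0mem
  have hge : ∑ i ∈ Finset.Icc v (t + r - 1), nper r hr n i
      ≤ ∑ i ∈ Finset.Icc v u0, nper r hr n i := by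
    have := hu0max (t + r - 1) (by simp only [Finset.mem_Icc]; omega)
    simpa using this
  rcases le_or_gt (∑ i ∈ Finset.Icc v (t + r - 1), nper r hr n i) 0 with hneg | hpos
  · linarith [signDevNonpos_nonneg hr n]
  · have hsuffix : ∀ w : ℕ, v ≤ w → w ≤ u0 →
        0 ≤ ∑ i ∈ Finset.Icc w u0, nper r hr n i := by
      intro w hw1 hw2
      rcases Nat.eq_or_lt_of_le hw1 with rfl | hlt
      · linarith
      · have hsplitw : ∑ i ∈ Finset.Icc w u0, nper r hr n i
            = ∑ i ∈ Finset.Icc v u0, nper r hr n i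
              - ∑ i ∈ Finset.Icc v (w - 1), nper r hr n i := by
          have hs := sum_Icc_split (nper r hr n) (t := v) (d := w - 1) (u := u0)
            (by omega) (by omega)
          rw [show w - 1 + 1 = w by omega] at hs
          linarith
        have hmax := hu0max (w - 1) (by simp only [Finset.mem_Icc]; omega)
        linarith
    have hmem : (∑ i ∈ Finset.Icc v u0, nper r hr n i)
        ∈ insert (0:ℤ) {z : ℤ | ∃ t u : ℕ, 1 ≤ t ∧ t ≤ r ∧ t ≤ u ∧ u ≤ r + t - 1 ∧
          (∀ v : ℕ, t ≤ v → v ≤ u → 0 ≤ (∑ i ∈ Finset.Icc v u, nper r hr n i)) ∧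
          z = (∑ i ∈ Finset.Icc t u, nper r hr n i)} := by
      apply Set.mem_insert_of_mem
      rcases le_or_gt v r with hvr | hvr
      · exact ⟨v, u0, by omega, hvr, hu0mem.1, by omega, hsuffix, rfl⟩
      · have hshift : ∑ i ∈ Finset.Icc (v - r) (u0 - r), nper r hr n i
            = ∑ i ∈ Finset.Icc v u0, nper r hr n i := by
          rw [← sum_shift hr n (v - r) (u0 - r), show v - r + r = v by omega,
            show u0 - r + r = u0 by omega]
        refine ⟨v - r, u0 - r, by omega, by omega, by omega, by omega, ?_, hshift.symm⟩
        intro w hw1 hw2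
        have hs2 : ∑ i ∈ Finset.Icc w (u0 - r), nper r hr n i
            = ∑ i ∈ Finset.Icc (w + r) u0, nper r hr n i := by
          rw [← sum_shift hr n w (u0 - r), show u0 - r + r = u0 by omega]
        rw [hs2]
        exact hsuffix (w + r) (by omega) (by omega)
    have h2 : (∑ i ∈ Finset.Icc v u0, nper r hr n i) ≤ signDevNonpos r hr n :=
      le_csSup (bddAbove_nonpos hr n) hmem
    linarith

/-! ### Module-theoretic part -/

section ModulePart

variable (p : ℕ) [Fact p.Prime] (k : Type) [Field k] [CharP k p]

lemma pUnit_coe : ((pUnit p k : (Wp p k)ˣ) : Wp p k)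
    = algebraMap (WittVector p k) (Wp p k) (p : WittVector p k) :=
  IsUnit.unit_spec _

lemma pUnit_pow_coe (a : ℕ) : ((pUnit p k ^ (a : ℤ) : (Wp p k)ˣ) : Wp p k)
    = algebraMap (WittVector p k) (Wp p k) ((p : WittVector p k) ^ a) := by
  rw [zpow_natCast, Units.val_pow_eq_pow_val, pUnit_coe, map_pow]

lemma wp_algebraMap_injective :
    Function.Injective (algebraMap (WittVector p k) (Wp p k)) :=
  IsLocalization.injective (Wp p k)
    (powers_le_nonZeroDivisors_of_noZeroDivisors (WittVector.irreducible p (k := k)).ne_zero)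

lemma linearIndependent_single (r : ℕ) :
    LinearIndependent (Wp p k) (fun i : Fin r => Pi.single i (1 : Wp p k)) := by
  rw [Fintype.linearIndependent_iff]
  intro g hg i
  have := congrFun hg i
  simpa [Finset.sum_apply, Pi.single_apply] using this

/-- The scaled basis vectors. -/
noncomputable def fvec (r : ℕ) (b : Fin r → ℕ) : Fin r → (Fin r → Wp p k) :=
  fun i => ((pUnit p k ^ ((b i : ℤ)) : (Wp p k)ˣ) : Wp p k) • Pi.single i (1 : Wp p k)

lemma fvec_eq (r : ℕ) (b : Fin r → ℕ) (i : Fin r) :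
    fvec p k r b i
      = ((p : WittVector p k) ^ (b i)) • (Pi.single i (1 : Wp p k) : Fin r → Wp p k) := by
  unfold fvec
  rw [pUnit_pow_coe]
  exact algebraMap_smul (A := Wp p k) ((p : WittVector p k) ^ (b i))
    (Pi.single i (1 : Wp p k) : Fin r → Wp p k)

lemma fvec_li (r : ℕ) (b : Fin r → ℕ) :
    LinearIndependent (WittVector p k) (fvec p k r b) := by
  have hWp : LinearIndependent (Wp p k) (fvec p k r b) := by
    unfold fvec
    rw [Fintype.linearIndependent_iff]
    intro g hg j
    have h1 := congrFun hg j
    have h2 : g j * ((pUnit p k ^ ((b j : ℤ)) : (Wp p k)ˣ) : Wp p k) = 0 := by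
      simpa [Finset.sum_apply, Pi.single_apply, mul_ite] using h1
    exact (Units.mul_left_eq_zero _).mp h2
  refine hWp.restrict_scalars ?_
  intro x y hxy
  apply wp_algebraMap_injective p k
  rw [Algebra.algebraMap_eq_smul_one, Algebra.algebraMap_eq_smul_one]
  exact hxy

lemma fvec_phi (r : ℕ) [NeZero r] (n : Fin r → ℤ)
    (φ : (Fin r → Wp p k) → (Fin r → Wp p k))
    (hsemi : ∀ (c : WittVector p k) v, φ ((algebraMap (WittVector p k) (Wp p k) c) • v) =
      (algebraMap (WittVector p k) (Wp p k) (WittVector.frobenius c)) • φ v)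
    (hbasis : ∀ i : Fin r, φ (Pi.single i (1 : Wp p k)) =
      ((pUnit p k ^ (n i) : (Wp p k)ˣ) : Wp p k) • Pi.single (i + 1) (1 : Wp p k))
    (b : Fin r → ℕ) (i : Fin r) :
    φ (fvec p k r b i)
      = ((pUnit p k ^ (n i + (b i : ℤ) - (b (i + 1) : ℤ)) : (Wp p k)ˣ) : Wp p k)
        • fvec p k r b (i + 1) := by
  unfold fvec
  rw [pUnit_pow_coe, hsemi, map_pow, map_natCast, hbasis i,
    ← pUnit_pow_coe p k (b i), smul_smul, smul_smul, ← Units.val_mul, ← Units.val_mul,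
    ← zpow_add, ← zpow_add,
    show (b i : ℤ) + n i = n i + (b i : ℤ) - (b (i + 1) : ℤ) + (b (i + 1) : ℤ) by ring]

lemma fvec_le_stdLat (r : ℕ) (b : Fin r → ℕ) :
    Submodule.span (WittVector p k) (Set.range (fvec p k r b)) ≤ stdLat p k r := by
  rw [Submodule.span_le]
  rintro x ⟨i, rfl⟩
  rw [fvec_eq p k r b i]
  exact Submodule.smul_mem _ _ (Submodule.subset_span ⟨i, rfl⟩)

lemma fvec_torsion (r : ℕ) (b : Fin r → ℕ) (T : ℕ) (hbT : ∀ i, b i ≤ T) :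
    ∀ x ∈ stdLat p k r, ((p : WittVector p k) ^ T) • x
      ∈ Submodule.span (WittVector p k) (Set.range (fvec p k r b)) := by
  intro x hx
  refine Submodule.span_induction ?_ ?_ ?_ ?_ hx
  · rintro y ⟨i, rfl⟩
    show ((p : WittVector p k) ^ T) • (Pi.single i (1 : Wp p k) : Fin r → Wp p k) ∈ _
    have hTb := hbT i
    have h2 : ((p : WittVector p k) ^ T) • (Pi.single i (1 : Wp p k) : Fin r → Wp p k)
        = ((p : WittVector p k) ^ (T - b i)) • fvec p k r b i := by
      rw [fvec_eq p k r b i, smul_smul, ← pow_add, show T - b i + b i = T by omega]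
    rw [h2]
    exact Submodule.smul_mem _ _ (Submodule.subset_span ⟨i, rfl⟩)
  · have hz : ((p : WittVector p k) ^ T) • (0 : Fin r → Wp p k) = 0 :=
      smul_zero (M := WittVector p k) (A := Fin r → Wp p k) _
    rw [hz]
    exact Submodule.zero_mem _
  · intro y z _ _ hy hz
    rw [smul_add]
    exact Submodule.add_mem _ hy hz
  · intro c y _ hy
    have hcomm : ((p : WittVector p k) ^ T) • c • y = c • ((p : WittVector p k) ^ T) • y := by
      rw [smul_smul, smul_smul, mul_comm]
    rw [hcomm]
    exact Submodule.smul_mem _ _ hy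

lemma mem_torsionSet (r : ℕ) [NeZero r] (n : Fin r → ℤ)
    (φ : (Fin r → Wp p k) → (Fin r → Wp p k))
    (hsemi : ∀ (c : WittVector p k) v, φ ((algebraMap (WittVector p k) (Wp p k) c) • v) =
      (algebraMap (WittVector p k) (Wp p k) (WittVector.frobenius c)) • φ v)
    (hbasis : ∀ i : Fin r, φ (Pi.single i (1 : Wp p k)) =
      ((pUnit p k ^ (n i) : (Wp p k)ˣ) : Wp p k) • Pi.single (i + 1) (1 : Wp p k))
    (b : Fin r → ℕ) (T : ℕ) (hbT : ∀ i, b i ≤ T)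
    (hsgn : (∀ i, 0 ≤ n i + (b i : ℤ) - (b (i + 1) : ℤ))
      ∨ (∀ i, n i + (b i : ℤ) - (b (i + 1) : ℤ) ≤ 0)) :
    T ∈ DFTorsionSet p k r φ := by
  classical
  have hphi : ∀ i : Fin r, φ (fvec p k r b i)
      = ((pUnit p k ^ (n i + (b i : ℤ) - (b (i + 1) : ℤ)) : (Wp p k)ˣ) : Wp p k)
        • fvec p k r b ((Equiv.addRight (1 : Fin r)) i) := by
    intro i
    rw [Equiv.coe_addRight]
    exact fvec_phi p k r n φ hsemi hbasis b i
  have hcyc : ∀ i j : Fin r, (Equiv.addRight (1 : Fin r)).SameCycle i j →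
      ((0 ≤ n i + (b i : ℤ) - (b (i + 1) : ℤ) ∧ 0 ≤ n j + (b j : ℤ) - (b (j + 1) : ℤ))
        ∨ (n i + (b i : ℤ) - (b (i + 1) : ℤ) ≤ 0 ∧ n j + (b j : ℤ) - (b (j + 1) : ℤ) ≤ 0)) := by
    intro i j _
    rcases hsgn with h | h
    · exact Or.inl ⟨h i, h j⟩
    · exact Or.inr ⟨h i, h j⟩
  exact ⟨Submodule.span (WittVector p k) (Set.range (fvec p k r b)),
    ⟨fvec p k r b, Equiv.addRight 1, fun i => n i + (b i : ℤ) - (b (i + 1) : ℤ),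
      rfl, fvec_li p k r b, hphi, hcyc⟩,
    fvec_le_stdLat p k r b, fvec_torsion p k r b T hbT⟩

lemma succ_shift (r : ℕ) [NeZero r] (A : ℕ → ℤ) (hper : A (r + r) = A r) (i : Fin r) :
    A (((i + 1 : Fin r) : ℕ) + r) = A ((i : ℕ) + r + 1) := by
  have hval : ((i + 1 : Fin r) : ℕ) = ((i : ℕ) + 1) % r := by
    rw [Fin.val_add, Fin.val_one']
    conv_rhs => rw [Nat.add_mod]
    rw [Nat.mod_eq_of_lt i.isLt]
  rw [hval]
  rcases Nat.lt_or_ge ((i : ℕ) + 1) r with h | h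
  · rw [show ((i : ℕ) + 1) % r + r = (i : ℕ) + r + 1 from by rw [Nat.mod_eq_of_lt h]; omega]
  · have hin : (i : ℕ) + 1 = r := by have := i.isLt; omega
    rw [show ((i : ℕ) + 1) % r + r = r from by rw [hin, Nat.mod_self, Nat.zero_add],
      show (i : ℕ) + r + 1 = r + r from by omega, hper]

section Part1

variable (p : ℕ) [Fact p.Prime] (k : Type) [Field k] [CharP k p]
variable (r : ℕ) [NeZero r] (hr : 0 < r) (n : Fin r → ℤ)
variable (φ : (Fin r → Wp p k) → (Fin r → Wp p k))

lemma part1_nonneg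
    (hsemi : ∀ (c : WittVector p k) v, φ ((algebraMap (WittVector p k) (Wp p k) c) • v) =
      (algebraMap (WittVector p k) (Wp p k) (WittVector.frobenius c)) • φ v)
    (hbasis : ∀ i : Fin r, φ (Pi.single i (1 : Wp p k)) =
      ((pUnit p k ^ (n i) : (Wp p k)ˣ) : Wp p k) • Pi.single (i + 1) (1 : Wp p k))
    (hsum : 0 ≤ ∑ i, n i) :
    ((sInf (DFTorsionSet p k r φ) : ℕ) : ℤ) ≤ signDevNonneg r hr n := by
  have hSD0 := signDevNonneg_nonneg hr n
  have hbcast : ∀ t : ℕ, ((Apos hr n t).toNat : ℤ) = Apos hr n t :=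
    fun t => Int.toNat_of_nonneg (Apos_nonneg hr n t)
  have hAsucc : ∀ i : Fin r, Apos hr n (((i + 1 : Fin r) : ℕ) + r) = Apos hr n ((i : ℕ) + r + 1) :=
    succ_shift r (Apos hr n) (Apos_per hr n r) 
  have hmem : (signDevNonneg r hr n).toNat ∈ DFTorsionSet p k r φ := by
    apply mem_torsionSet p k r n φ hsemi hbasis
      (fun i : Fin r => (Apos hr n ((i : ℕ) + r)).toNat)
    · intro i
      show (Apos hr n ((i : ℕ) + r)).toNat ≤ (signDevNonneg r hr n).toNat
      have h1 : Apos hr n ((i : ℕ) + r) ≤ signDevNonneg r hr n := by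
        rcases Nat.eq_zero_or_pos (i : ℕ) with h0 | h0
        · rw [h0, Nat.zero_add]
          exact Apos_bound hr n r hr (le_refl r)
        · rw [Apos_per hr n (i : ℕ)]
          exact Apos_bound hr n (i : ℕ) h0 (le_of_lt i.isLt)
      exact Int.toNat_le_toNat h1
    · left
      intro i
      show 0 ≤ n i + ((Apos hr n ((i : ℕ) + r)).toNat : ℤ)
        - ((Apos hr n (((i + 1 : Fin r) : ℕ) + r)).toNat : ℤ)
      have hrec := Apos_rec hr n hsum ((i : ℕ) + r) (by omega)
      have hNt : nper r hr n ((i : ℕ) + r) = n i := by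
        rw [nper_add hr n (i : ℕ), nper_val hr n i]
      rw [hNt] at hrec
      rw [hbcast, hbcast, hAsucc i]
      linarith
  have hinf := Nat.sInf_le hmem
  calc ((sInf (DFTorsionSet p k r φ) : ℕ) : ℤ)
      ≤ (((signDevNonneg r hr n).toNat : ℕ) : ℤ) := by exact_mod_cast hinf
    _ = signDevNonneg r hr n := Int.toNat_of_nonneg hSD0

lemma part1_nonpos
    (hsemi : ∀ (c : WittVector p k) v, φ ((algebraMap (WittVector p k) (Wp p k) c) • v) =
      (algebraMap (WittVector p k) (Wp p k) (WittVector.frobenius c)) • φ v)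
    (hbasis : ∀ i : Fin r, φ (Pi.single i (1 : Wp p k)) =
      ((pUnit p k ^ (n i) : (Wp p k)ˣ) : Wp p k) • Pi.single (i + 1) (1 : Wp p k))
    (hsum : ∑ i, n i ≤ 0) :
    ((sInf (DFTorsionSet p k r φ) : ℕ) : ℤ) ≤ signDevNonpos r hr n := by
  have hSD0 := signDevNonpos_nonneg hr n
  have hbcast : ∀ t : ℕ, ((Aneg hr n t).toNat : ℤ) = Aneg hr n t :=
    fun t => Int.toNat_of_nonneg (Aneg_nonneg hr n t)
  have hAsucc : ∀ i : Fin r, Aneg hr n (((i + 1 : Fin r) : ℕ) + r) = Aneg hr n ((i : ℕ) + r + 1) :=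
    succ_shift r (Aneg hr n) (Aneg_per hr n r)
  have hmem : (signDevNonpos r hr n).toNat ∈ DFTorsionSet p k r φ := by
    apply mem_torsionSet p k r n φ hsemi hbasis
      (fun i : Fin r => (Aneg hr n ((i : ℕ) + r)).toNat)
    · intro i
      show (Aneg hr n ((i : ℕ) + r)).toNat ≤ (signDevNonpos r hr n).toNat
      have h1 : Aneg hr n ((i : ℕ) + r) ≤ signDevNonpos r hr n := by
        rcases Nat.eq_zero_or_pos (i : ℕ) with h0 | h0
        · rw [h0, Nat.zero_add]
          exact Aneg_bound hr n r hr (le_refl r)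
        · rw [Aneg_per hr n (i : ℕ)]
          exact Aneg_bound hr n (i : ℕ) h0 (le_of_lt i.isLt)
      exact Int.toNat_le_toNat h1
    · right
      intro i
      show n i + ((Aneg hr n ((i : ℕ) + r)).toNat : ℤ)
        - ((Aneg hr n (((i + 1 : Fin r) : ℕ) + r)).toNat : ℤ) ≤ 0
      have hrec := Aneg_rec hr n hsum ((i : ℕ) + r)
      have hNt : nper r hr n ((i : ℕ) + r) = n i := by
        rw [nper_add hr n (i : ℕ), nper_val hr n i]
      rw [hNt] at hrec
      rw [hbcast, hbcast, hAsucc i]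
      linarith
  have hinf := Nat.sInf_le hmem
  calc ((sInf (DFTorsionSet p k r φ) : ℕ) : ℤ)
      ≤ (((signDevNonpos r hr n).toNat : ℕ) : ℤ) := by exact_mod_cast hinf
    _ = signDevNonpos r hr n := Int.toNat_of_nonneg hSD0

end Part1

end ModulePart

end Stmt9Aux


/-- If `(M,φ)` over an algebraically closed field `k` of characteristic `p` has a
`W(k)`-basis `e_1, …, e_r` with `φ(e_i) = p^{n_i} e_{i+1}` (cyclically), then
`𝐓(M,φ) ≤ 𝐒τ ≤ 𝐖τ ≤ |n_1| + ⋯ + |n_r|`. -/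
theorem stmt9 (p : ℕ) [Fact p.Prime] (k : Type) [Field k] [CharP k p] [IsAlgClosed k]
    (r : ℕ) [NeZero r] (hr : 0 < r) (n : Fin r → ℤ)
    (φ : (Fin r → Wp p k) → (Fin r → Wp p k))
    (hadd : ∀ u v, φ (u + v) = φ u + φ v)
    (hsemi : ∀ (c : WittVector p k) v, φ ((algebraMap (WittVector p k) (Wp p k) c) • v) =
      (algebraMap (WittVector p k) (Wp p k) (WittVector.frobenius c)) • φ v)
    (hbij : Function.Bijective φ)
    (hbasis : ∀ i : Fin r, φ (Pi.single i (1 : Wp p k)) =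
      ((pUnit p k ^ (n i) : (Wp p k)ˣ) : Wp p k) • Pi.single (i + 1) (1 : Wp p k)) :
    (((sInf (DFTorsionSet p k r φ) : ℕ) : ℤ) ≤ signDev r hr n) ∧
      signDev r hr n ≤ valueDev r n ∧
      valueDev r n ≤ ∑ i, |n i| := by
  refine ⟨?_, ?_, ?_⟩
  · unfold signDev
    rcases lt_trichotomy (∑ i, n i) 0 with h | h | h
    · rw [if_neg (lt_asymm h), if_pos h]
      exact Stmt9Aux.part1_nonpos p k r hr n φ hsemi hbasis h.le
    · rw [if_neg (by rw [h]; exact lt_irrefl 0), if_neg (by rw [h]; exact lt_irrefl 0)]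
      exact le_min (Stmt9Aux.part1_nonneg p k r hr n φ hsemi hbasis (le_of_eq h.symm))
        (Stmt9Aux.part1_nonpos p k r hr n φ hsemi hbasis h.le)
    · rw [if_pos h]
      exact Stmt9Aux.part1_nonneg p k r hr n φ hsemi hbasis h.le
  · unfold signDev valueDev
    split_ifs with h1 h2
    · exact Stmt9Aux.signDevNonneg_le hr n
    · exact Stmt9Aux.signDevNonpos_le hr n
    · exact min_le_min (Stmt9Aux.signDevNonneg_le hr n) (Stmt9Aux.signDevNonpos_le hr n)
  · unfold valueDev
    have hpt1 : ∀ i : Fin r, max 0 (-(n i)) ≤ |n i| :=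
      fun i => max_le (abs_nonneg _) (neg_le_abs _)
    have hpt2 : ∀ i : Fin r, max 0 (n i) ≤ |n i| :=
      fun i => max_le (abs_nonneg _) (le_abs_self _)
    split_ifs with h1 h2
    · exact Finset.sum_le_sum fun i _ => hpt1 i
    · exact Finset.sum_le_sum fun i _ => hpt2 i
    · exact le_trans (min_le_left _ _) (Finset.sum_le_sum fun i _ => hpt1 i)
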